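/- Let I and J be ideal functors on an abelian category C, and let I ⊔ J denote their join as subobjects of the identity functor 𝟭_C in the abelian functor category C ⥤ C. Then I ⊔ J is again an ideal functor on C, and there is a natural isomorphism T_I ∘ T_J ≅ T_{I ⊔ J} (where T_I ∘ T_J applies first T_J and then T_I). -/

import Mathlib

open CategoryTheory CategoryTheory.Limits

/-- In an abelian category, for subobjects `I J` of `X`, the cokernel of the induced map
`J ⟶ X/I` is `X/(I ⊔ J)`. -/
noncomputable def cokernelCompCokernelπIsoCokernelSup {A : Type*} [Category A] [Abelian A]
    {X : A} (I J : Subobject X) :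
    cokernel (J.arrow ≫ cokernel.π I.arrow) ≅ cokernel (I ⊔ J).arrow := by
  have h1 : I.arrow ≫ cokernel.π (I ⊔ J).arrow = 0 := by
    rw [← Subobject.ofLE_arrow (le_sup_left : I ≤ I ⊔ J), Category.assoc,
      cokernel.condition, comp_zero]
  have h2 : J.arrow ≫ cokernel.π (I ⊔ J).arrow = 0 := by
    rw [← Subobject.ofLE_arrow (le_sup_right : J ≤ I ⊔ J), Category.assoc,
      cokernel.condition, comp_zero]
  set ρ := cokernel.π (J.arrow ≫ cokernel.π I.arrow)
  have hle : I ⊔ J ≤ kernelSubobject (cokernel.π I.arrow ≫ ρ) := by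
    refine sup_le (le_kernelSubobject _ _ ?_)
      (le_kernelSubobject _ _ ?_)
    · rw [cokernel.condition_assoc, zero_comp]
    · rw [← Category.assoc, cokernel.condition]
  have h3 : (I ⊔ J).arrow ≫ cokernel.π I.arrow ≫ ρ = 0 := by
    rw [← Subobject.ofLE_arrow hle, Category.assoc, kernelSubobject_arrow_comp, comp_zero]
  refine ⟨cokernel.desc _ (cokernel.desc I.arrow (cokernel.π (I ⊔ J).arrow) h1)
      (by rw [Category.assoc, cokernel.π_desc, h2]),
    cokernel.desc _ (cokernel.π I.arrow ≫ ρ) h3, ?_, ?_⟩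
  · have key : cokernel.desc I.arrow (cokernel.π (I ⊔ J).arrow) h1 ≫
        cokernel.desc (I ⊔ J).arrow (cokernel.π I.arrow ≫ ρ) h3 = ρ := by
      rw [← cancel_epi (cokernel.π I.arrow), cokernel.π_desc_assoc, cokernel.π_desc]
    apply coequalizer.hom_ext
    simp [ρ, key]
  · apply coequalizer.hom_ext
    simp only [Category.comp_id, Category.assoc]
    rw [cokernel.π_desc_assoc, Category.assoc, cokernel.π_desc, cokernel.π_desc]

theorem sup_ideal_functor_isIdeal_and_cokernel_comp
    {C : Type*} [Category C] [Abelian C]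
    (I J : Subobject (𝟭 C : C ⥤ C))
    (hI : (cokernel I.arrow).IsLeftAdjoint) (hJ : (cokernel J.arrow).IsLeftAdjoint) :
    (cokernel (I ⊔ J).arrow).IsLeftAdjoint ∧
      Nonempty ((cokernel J.arrow ⋙ cokernel I.arrow) ≅ cokernel (I ⊔ J).arrow) := by
  haveI := hI
  haveI := hJ
  set T : C ⥤ C := cokernel I.arrow with hT
  obtain ⟨R, ⟨adj⟩⟩ := hI
  haveI : PreservesColimits T := adj.leftAdjoint_preservesColimits
  haveI : T.PreservesZeroMorphisms := inferInstance
  set W : (C ⥤ C) ⥤ (C ⥤ C) := (Functor.whiskeringRight C C C).obj T with hW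
  haveI : W.PreservesZeroMorphisms := by
    constructor
    intro F G
    ext X
    simp [hW]
  -- the cokernel functor `T` preserves the pointwise cokernel defining `cokernel J.arrow`
  let e1 : cokernel J.arrow ⋙ T ≅ cokernel (W.map J.arrow) :=
    PreservesCokernel.iso W J.arrow
  have heq : Functor.whiskerLeft (J : C ⥤ C) (cokernel.π I.arrow) ≫ W.map J.arrow =
      J.arrow ≫ cokernel.π I.arrow := by
    ext X
    exact ((cokernel.π I.arrow).naturality (J.arrow.app X)).symm
  haveI : Epi (Functor.whiskerLeft (J : C ⥤ C) (cokernel.π I.arrow)) := by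
    have : ∀ X, Epi ((Functor.whiskerLeft (J : C ⥤ C) (cokernel.π I.arrow)).app X) :=
      fun X => inferInstanceAs (Epi ((cokernel.π I.arrow).app ((J : C ⥤ C).obj X)))
    exact NatTrans.epi_of_epi_app _
  let e2 : cokernel (W.map J.arrow) ≅
      cokernel (Functor.whiskerLeft (J : C ⥤ C) (cokernel.π I.arrow) ≫ W.map J.arrow) :=
    (cokernelEpiComp _ _).symm
  let e3 : cokernel (Functor.whiskerLeft (J : C ⥤ C) (cokernel.π I.arrow) ≫ W.map J.arrow) ≅
      cokernel (J.arrow ≫ cokernel.π I.arrow) := cokernelIsoOfEq heq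
  let e4 := cokernelCompCokernelπIsoCokernelSup I J
  let e : cokernel J.arrow ⋙ T ≅ cokernel (I ⊔ J).arrow := e1 ≪≫ e2 ≪≫ e3 ≪≫ e4
  exact ⟨Functor.isLeftAdjoint_of_iso e, ⟨e⟩⟩
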